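/- Let Ω be a complex manifold and S ⊆ Ω a closed subset. Suppose for every point a ∈ S there is a Stein open neighbourhood V of a such that V \ S is Stein. If V is any Stein open subset of Ω biholomorphic to a ball and every holomorphic embedding φ of the squeezed polydisc T into V \ S extends to a holomorphic embedding of the unit polydisc U into V \ S, then V \ S satisfies the Docquier–Grauert p₇-pseudoconvexity condition. -/

import Mathlib

open MeasureTheory Set Manifold Topology ENNReal

noncomputable section

/-- `ℂⁿ` as a complex Euclidean space. -/
abbrev Cn (n : ℕ) : Type := EuclideanSpace ℂ (Fin n)

section Defs

variable (E₁ E₂ : Type) [NormedAddCommGroup E₁] [NormedSpace ℂ E₁]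
  [NormedAddCommGroup E₂] [NormedSpace ℂ E₂]
variable {Ω : Type} [TopologicalSpace Ω] [ChartedSpace E₁ Ω]
variable {X : Type} [TopologicalSpace X] [ChartedSpace E₂ X]

/-- A map between complex charted spaces (with model spaces `E₁`, `E₂`) is
holomorphic on `s` iff it is `MDifferentiable` there. -/
def HoloMapOn (f : Ω → X) (s : Set Ω) : Prop :=
  MDifferentiableOn 𝓘(ℂ, E₁) 𝓘(ℂ, E₂) f s

/-- A ℂ-valued function on a complex charted space is holomorphic on `s`. -/
def HoloFnOn (f : Ω → ℂ) (s : Set Ω) : Prop :=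
  MDifferentiableOn 𝓘(ℂ, E₁) 𝓘(ℂ, ℂ) f s

/-- `A` is a (closed) complex analytic subset of the open set `U`: locally the
common zero locus of finitely many holomorphic functions. -/
def AnalyticSubsetIn (A U : Set Ω) : Prop :=
  A ⊆ U ∧ closure A ∩ U ⊆ A ∧
  ∀ a ∈ U, ∃ V : Set Ω, IsOpen V ∧ a ∈ V ∧ V ⊆ U ∧ ∃ k : ℕ, ∃ g : Fin k → Ω → ℂ,
    (∀ i, HoloFnOn E₁ (g i) V) ∧ A ∩ V = {x ∈ V | ∀ i, g i x = 0}

/-- A meromorphic map on the open set `U`: holomorphic off a nowhere dense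
analytic subset of `U` (its polar/indeterminacy set). -/
def MeroMapOn (f : Ω → X) (U : Set Ω) : Prop :=
  IsOpen U ∧ ∃ P : Set Ω, AnalyticSubsetIn E₁ P U ∧ interior P = ∅ ∧
    HoloMapOn E₁ E₂ f (U \ P)

/-- `g` (on `V`) agrees with `f` (given on `U`) as meromorphic maps: they are
equal on `V ∩ U` off a nowhere dense set. -/
def MeroAgrees (f : Ω → X) (U : Set Ω) (g : Ω → X) (V : Set Ω) : Prop :=
  ∃ N : Set Ω, interior N = ∅ ∧ Set.EqOn g f ((V ∩ U) \ N)

/-- `f` (meromorphic on `U`) extends meromorphically to a neighbourhood of `a`. -/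
def MeroExtendsAt (f : Ω → X) (U : Set Ω) (a : Ω) : Prop :=
  ∃ V : Set Ω, IsOpen V ∧ a ∈ V ∧ ∃ g : Ω → X, MeroMapOn E₁ E₂ g V ∧ MeroAgrees f U g V

/-- An open set `D` is Stein: holomorphically separable and holomorphically
convex (with respect to functions holomorphic on `D`). -/
def SteinOn (D : Set Ω) : Prop :=
  IsOpen D ∧
  (∀ x ∈ D, ∀ y ∈ D, x ≠ y → ∃ h : Ω → ℂ, HoloFnOn E₁ h D ∧ h x ≠ h y) ∧
  (∀ K : Set Ω, K ⊆ D → IsCompact K →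
    IsCompact {x ∈ D | ∀ h : Ω → ℂ, HoloFnOn E₁ h D → ‖h x‖ ≤ ⨆ y ∈ K, ‖h y‖})

/-- A pure codimension-one (i.e. pure `(n-1)`-dimensional) complex analytic
subset of the whole space: a nowhere dense closed set which is locally the zero
locus of a single holomorphic function. -/
def AnalyticHypersurface (A : Set Ω) : Prop :=
  IsClosed A ∧ interior A = ∅ ∧
  ∀ a ∈ A, ∃ V : Set Ω, IsOpen V ∧ a ∈ V ∧ ∃ g : Ω → ℂ,
    HoloFnOn E₁ g V ∧ A ∩ V = {x ∈ V | g x = 0}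

end Defs

/-- The ambient space `ℂ^{n-1} × ℂ` of the squeezed polydisc. -/
abbrev Wsp (n : ℕ) : Type := (Fin (n - 1) → ℂ) × ℂ

/-- The squeezed polydisc (Hartogs figure)
`T = {|z| < r, |w| < 1} ∪ {|z| < 1, 1 - r < |w| < 1}` in `ℂ^{n-1} × ℂ`. -/
def sqPolydisc (n : ℕ) (r : ℝ) : Set (Wsp n) :=
  {p | ‖p.1‖ < r ∧ ‖p.2‖ < 1} ∪
  {p | ‖p.1‖ < 1 ∧ 1 - r < ‖p.2‖ ∧ ‖p.2‖ < 1}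

/-- The unit polydisc `U = {|z| < 1, |w| < 1}` in `ℂ^{n-1} × ℂ`. -/
def unitPolydisc (n : ℕ) : Set (Wsp n) :=
  {p | ‖p.1‖ < 1 ∧ ‖p.2‖ < 1}

/-- `X` has the meromorphic extension property (in dimension `n`): every
meromorphic map of a squeezed polydisc into `X` extends meromorphically to the
unit polydisc. -/
def MeroExtensionProperty (E₂ : Type) [NormedAddCommGroup E₂] [NormedSpace ℂ E₂]
    (X : Type) [TopologicalSpace X] [ChartedSpace E₂ X] (n : ℕ) : Prop :=
  ∀ r : ℝ, 0 < r → r < 1 → ∀ f : Wsp n → X, MeroMapOn (Wsp n) E₂ f (sqPolydisc n r) →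
    ∃ g : Wsp n → X, MeroMapOn (Wsp n) E₂ g (unitPolydisc n) ∧
      MeroAgrees f (sqPolydisc n r) g (unitPolydisc n)

/-- Hausdorff measure of dimension `d` on an extended metric space, with the
Borel σ-algebra. -/
def hMeasB (α : Type) [EMetricSpace α] (d : ℝ) : @Measure α (borel α) :=
  @Measure.hausdorffMeasure α _ (borel α) (@BorelSpace.mk α _ (borel α) rfl) d

/-- `S` has locally finite Hausdorff `d`-measure on the manifold `Ω`, computed
in the charts. -/
def LocFiniteHausdorff (n : ℕ) {Ω : Type} [TopologicalSpace Ω]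
    [ChartedSpace (Cn n) Ω] (d : ℝ) (S : Set Ω) : Prop :=
  ∀ a : Ω, ∀ K : Set Ω, K ⊆ (chartAt (Cn n) a).source → IsCompact K →
    hMeasB (Cn n) d ((chartAt (Cn n) a) '' (S ∩ K)) < ⊤

/-- if `S` is locally pseudoconcave, `V` is a Stein open set
biholomorphic to a ball, and every holomorphic embedding of the squeezed
polydisc `T` into `V \ S` extends to a holomorphic embedding of the unit
polydisc `U` into `V \ S`, then `V \ S` satisfies the Docquier–Grauert `p₇`
condition: every injective holomorphic map `Φ : U → V` with `Φ(T) ⊆ V \ S`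
satisfies `Φ(U) ⊆ V \ S`. -/
theorem stmt8 {n : ℕ} (hn : 2 ≤ n) (r : ℝ) (hr0 : 0 < r) (hr1 : r < 1)
    {Ω : Type} [TopologicalSpace Ω] [ChartedSpace (Cn n) Ω]
    (S : Set Ω) (hScl : IsClosed S)
    (hpc : ∀ a ∈ S, ∃ W : Set Ω, IsOpen W ∧ a ∈ W ∧ SteinOn (Cn n) W ∧
      SteinOn (Cn n) (W \ S))
    (V : Set Ω) (hVopen : IsOpen V) (hVStein : SteinOn (Cn n) V)
    (hball : ∃ (ψ : Ω → Cn n) (c : Cn n) (ρ : ℝ), 0 < ρ ∧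
      Set.InjOn ψ V ∧ ψ '' V = Metric.ball c ρ ∧ HoloMapOn (Cn n) (Cn n) ψ V ∧
      ∃ χ : Cn n → Ω, HoloMapOn (Cn n) (Cn n) χ (Metric.ball c ρ) ∧
        ∀ x ∈ V, χ (ψ x) = x)
    (hext : ∀ φ : Wsp n → Ω,
      HoloMapOn (Wsp n) (Cn n) φ (sqPolydisc n r) →
      Set.InjOn φ (sqPolydisc n r) →
      φ '' sqPolydisc n r ⊆ V \ S →
      ∃ Φ : Wsp n → Ω, HoloMapOn (Wsp n) (Cn n) Φ (unitPolydisc n) ∧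
        Set.InjOn Φ (unitPolydisc n) ∧ Φ '' unitPolydisc n ⊆ V \ S ∧
        Set.EqOn Φ φ (sqPolydisc n r)) :
    ∀ Φ : Wsp n → Ω, HoloMapOn (Wsp n) (Cn n) Φ (unitPolydisc n) →
      Set.InjOn Φ (unitPolydisc n) → Φ '' unitPolydisc n ⊆ V →
      Φ '' sqPolydisc n r ⊆ V \ S → Φ '' unitPolydisc n ⊆ V \ S := by
  intro Φ hΦholo hΦinj hΦU hΦT
  obtain ⟨ψ, c, ρ, hρ, hψinj, hψim, hψholo, χ, hχholo, hχψ⟩ := hball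
  have hTU : sqPolydisc n r ⊆ unitPolydisc n := by
    rintro p (⟨h1, h2⟩ | ⟨h1, h2, h3⟩)
    · exact ⟨h1.trans hr1, h2⟩
    · exact ⟨h1, h3⟩
  obtain ⟨Φ', hΦ'holo, hΦ'inj, hΦ'U, hEq⟩ :=
    hext Φ (hΦholo.mono hTU) (hΦinj.mono hTU) hΦT
  have hUo : IsOpen (unitPolydisc n) :=
    (isOpen_lt (continuous_norm.comp continuous_fst) continuous_const).inter
      (isOpen_lt (continuous_norm.comp continuous_snd) continuous_const)
  have hTo : IsOpen (sqPolydisc n r) := by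
    apply IsOpen.union
    · exact (isOpen_lt (continuous_norm.comp continuous_fst) continuous_const).inter
        (isOpen_lt (continuous_norm.comp continuous_snd) continuous_const)
    · exact (isOpen_lt (continuous_norm.comp continuous_fst) continuous_const).inter
        ((isOpen_lt continuous_const (continuous_norm.comp continuous_snd)).inter
          (isOpen_lt (continuous_norm.comp continuous_snd) continuous_const))
  have hUc : IsPreconnected (unitPolydisc n) := by
    have hUP : unitPolydisc n
        = (Metric.ball (0 : Fin (n-1) → ℂ) 1) ×ˢ (Metric.ball (0 : ℂ) 1) := by
      ext p
      simp [unitPolydisc, Set.mem_prod, Metric.mem_ball, dist_zero_right]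
    rw [hUP]
    exact ((convex_ball _ _).prod (convex_ball _ _)).isPreconnected
  have hz0 : ((0 : Fin (n-1) → ℂ), (0 : ℂ)) ∈ sqPolydisc n r := by
    left; constructor <;> simp [hr0]
  -- The compositions ψ ∘ Φ and ψ ∘ Φ' are holomorphic on the unit polydisc
  have hΦmem : ∀ p ∈ unitPolydisc n, Φ p ∈ V := fun p hp => hΦU ⟨p, hp, rfl⟩
  have hΦ'mem : ∀ p ∈ unitPolydisc n, Φ' p ∈ V \ S := fun p hp => hΦ'U ⟨p, hp, rfl⟩
  have hf : DifferentiableOn ℂ (ψ ∘ Φ) (unitPolydisc n) := by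
    have := (hψholo.comp hΦholo (fun p hp => hΦmem p hp) :
      MDifferentiableOn 𝓘(ℂ, Wsp n) 𝓘(ℂ, Cn n) (ψ ∘ Φ) (unitPolydisc n))
    exact mdifferentiableOn_iff_differentiableOn.mp this
  have hg : DifferentiableOn ℂ (ψ ∘ Φ') (unitPolydisc n) := by
    have := (hψholo.comp hΦ'holo (fun p hp => (hΦ'mem p hp).1) :
      MDifferentiableOn 𝓘(ℂ, Wsp n) 𝓘(ℂ, Cn n) (ψ ∘ Φ') (unitPolydisc n))
    exact mdifferentiableOn_iff_differentiableOn.mp this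
  -- Identity theorem along complex lines: h := ψ∘Φ' - ψ∘Φ vanishes on U
  set p₀ : Wsp n := ((0 : Fin (n-1) → ℂ), (0 : ℂ)) with hp₀def
  have hUconv : Convex ℝ (unitPolydisc n) := by
    have hUP : unitPolydisc n
        = (Metric.ball (0 : Fin (n-1) → ℂ) 1) ×ˢ (Metric.ball (0 : ℂ) 1) := by
      ext p
      simp [unitPolydisc, Set.mem_prod, Metric.mem_ball, dist_zero_right]
    rw [hUP]
    exact (convex_ball _ _).prod (convex_ball _ _)
  set h : Wsp n → Cn n := fun p => ψ (Φ' p) - ψ (Φ p) with hhdef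
  have hh : DifferentiableOn ℂ h (unitPolydisc n) := hg.sub hf
  have hhT : ∀ p ∈ sqPolydisc n r, h p = 0 := by
    intro p hp
    simp [hhdef, hEq hp]
  have hkey : ∀ q ∈ unitPolydisc n, h q = 0 := by
    intro q hq
    set L : ℂ → Wsp n := fun lam => lam • (q - p₀) + p₀ with hLdef
    have hLc : Continuous L := (continuous_id.smul continuous_const).add continuous_const
    set D : Set ℂ := L ⁻¹' unitPolydisc n with hDdef
    have hDo : IsOpen D := hUo.preimage hLc
    have hDconv : Convex ℝ D := by
      let Laff : ℂ →ᵃ[ℝ] Wsp n :=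
        { toFun := L
          linear := (LinearMap.toSpanSingleton ℂ (Wsp n) (q - p₀)).restrictScalars ℝ
          map_vadd' := by
            intro p v
            simp only [LinearMap.coe_restrictScalars, LinearMap.toSpanSingleton_apply]
            show (v + p) • (q - p₀) + p₀ = v • (q - p₀) + (p • (q - p₀) + p₀)
            rw [add_smul]; abel }
      exact hUconv.affine_preimage Laff
    have hL0 : L 0 = p₀ := by simp [hLdef]
    have hL1 : L 1 = q := by simp [hLdef]
    have h0D : (0 : ℂ) ∈ D := by
      show L 0 ∈ unitPolydisc n
      rw [hL0]; exact hTU hz0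
    have h1D : (1 : ℂ) ∈ D := by
      show L 1 ∈ unitPolydisc n
      rw [hL1]; exact hq
    have hLdiff : Differentiable ℂ L :=
      (differentiable_id.smul_const (q - p₀)).add_const p₀
    have hcomp : DifferentiableOn ℂ (h ∘ L) D :=
      hh.comp hLdiff.differentiableOn (fun lam hlam => hlam)
    have hca : AnalyticOnNhd ℂ (h ∘ L) D := hcomp.analyticOnNhd hDo
    have hza : AnalyticOnNhd ℂ (fun _ : ℂ => (0 : Cn n)) D := analyticOnNhd_const
    have hev : (h ∘ L) =ᶠ[nhds (0 : ℂ)] (fun _ : ℂ => (0 : Cn n)) := by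
      have hmem : L ⁻¹' (sqPolydisc n r) ∈ nhds (0 : ℂ) :=
        (hTo.preimage hLc).mem_nhds (by show L 0 ∈ sqPolydisc n r; rw [hL0]; exact hz0)
      filter_upwards [hmem] with lam hlam
      exact hhT _ hlam
    have := hca.eqOn_of_preconnected_of_eventuallyEq hza hDconv.isPreconnected h0D hev h1D
    simpa [hL1] using this
  intro y hy
  obtain ⟨p, hp, rfl⟩ := hy
  have h1 : ψ (Φ' p) = ψ (Φ p) := by
    have := hkey p hp
    simpa [hhdef, sub_eq_zero] using this
  have h2 : Φ' p = Φ p := hψinj (hΦ'mem p hp).1 (hΦmem p hp) h1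
  rw [← h2]
  exact hΦ'mem p hp
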